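/- arXiv:1606.03641 — 3 statements merged into one kernel-verified Lean document; each statement's English description precedes it below -/
import Mathlib

section
/- For all real α, β, let L₄(α,β) be the 4×4 matrix with rows (2+α, −1, −1, −α), (−1, 2+β, −1, −β), (−1, −1, 3, −1), (−α, −β, −1, 1+α+β). Then the characteristic polynomial of L₄(α,β) equals λ·(λ − 4)·(λ² − (4+2α+2β)λ + (3+5α+5β+3αβ)). -/
open Matrix Polynomial

/-- The parameter-dependent Laplacian `L₄(α,β)` from the paper. -/
noncomputable def L₄ (α β : ℝ) : Matrix (Fin 4) (Fin 4) ℝ :=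
  !![2 + α, -1, -1, -α;
     -1, 2 + β, -1, -β;
     -1, -1, 3, -1;
     -α, -β, -1, 1 + α + β]

set_option maxHeartbeats 1000000 in
theorem stmt_8 (α β : ℝ) :
    (L₄ α β).charpoly =
      X * (X - C (4 : ℝ)) *
        (X ^ 2 - C (4 + 2 * α + 2 * β) * X + C (3 + 5 * α + 5 * β + 3 * α * β)) := by
  have h : (L₄ α β).charmatrix =
      !![X - C (2 + α), C 1, C 1, C α;
         C 1, X - C (2 + β), C 1, C β;
         C 1, C 1, X - C 3, C 1;
         C α, C β, C 1, X - C (1 + α + β)] := by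
    ext i j
    fin_cases i <;> fin_cases j <;>
      simp [charmatrix_apply, L₄, Matrix.one_apply]
  rw [Matrix.charpoly, h]
  simp [Matrix.det_succ_row_zero, Fin.sum_univ_succ, Fin.succAbove,
    Fin.castSucc, Fin.castAdd, Fin.castLE, map_ofNat, _root_.map_add, _root_.map_mul]
  ring
end

section
/- For all real α, β, setting D = 1 − α + α² − β − αβ + β² (which is nonnegative), the characteristic polynomial of L₄(α,β) factors over ℝ as λ·(λ − 4)·(λ − (2+α+β+√D))·(λ − (2+α+β−√D)); hence the eigenvalues of L₄(α,β), with multiplicity, are 0, 4, 2+α+β+√D, and 2+α+β−√D. -/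
set_option maxHeartbeats 4000000

open Matrix Polynomial Real

theorem stmt_11 (α β : ℝ) (D : ℝ) (hD : D = 1 - α + α ^ 2 - β - α * β + β ^ 2) :
    0 ≤ D ∧
    (L₄ α β).charpoly =
      X * (X - C (4 : ℝ)) * (X - C (2 + α + β + Real.sqrt D)) *
        (X - C (2 + α + β - Real.sqrt D)) ∧
    (L₄ α β).charpoly.roots =
      ({0, 4, 2 + α + β + Real.sqrt D, 2 + α + β - Real.sqrt D} : Multiset ℝ) := by
  have hD0 : 0 ≤ D := by nlinarith [sq_nonneg (α - β), sq_nonneg (1 - α), sq_nonneg (1 - β)]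
  have hs : Real.sqrt D * Real.sqrt D = D := Real.mul_self_sqrt hD0
  have hC2 : (C (Real.sqrt D) : ℝ[X]) * C (Real.sqrt D) =
      1 - C α + C α ^ 2 - C β - C α * C β + C β ^ 2 := by
    rw [← C_mul, hs, hD]
    simp [C_sub, C_add, C_mul, C_pow]
  have hcm : charmatrix (L₄ α β) =
      !![X - C (2+α), C 1, C 1, C α;
         C 1, X - C (2+β), C 1, C β;
         C 1, C 1, X - C 3, C 1;
         C α, C β, C 1, X - C (1+α+β)] := by
    ext i j
    fin_cases i <;> fin_cases j <;>
      simp [charmatrix, L₄, Matrix.diagonal_apply]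
  have hfact : (L₄ α β).charpoly =
      X * (X - C (4 : ℝ)) * (X - C (2 + α + β + Real.sqrt D)) *
        (X - C (2 + α + β - Real.sqrt D)) := by
    rw [Matrix.charpoly, hcm]
    simp [Matrix.det_succ_row_zero, Fin.sum_univ_succ, Fin.succAbove,
      C_add, C_sub, Polynomial.C_eq_natCast, map_ofNat, Fin.castSucc,
      Fin.castAdd, Fin.castLE, Fin.succ]
    linear_combination (X * (X - 4 : ℝ[X])) * hC2
  refine ⟨hD0, hfact, ?_⟩
  rw [hfact]
  rw [roots_mul (mul_ne_zero (mul_ne_zero (mul_ne_zero X_ne_zero (X_sub_C_ne_zero _))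
        (X_sub_C_ne_zero _)) (X_sub_C_ne_zero _)),
      roots_mul (mul_ne_zero (mul_ne_zero X_ne_zero (X_sub_C_ne_zero _)) (X_sub_C_ne_zero _)),
      roots_mul (mul_ne_zero X_ne_zero (X_sub_C_ne_zero _)),
      roots_X, roots_X_sub_C, roots_X_sub_C, roots_X_sub_C]
  rfl
end

section
/- Let L₄'' = L₄(3,4), i.e. the 4×4 matrix with rows (5,−1,−1,−3), (−1,6,−1,−4), (−1,−1,3,−1), (−3,−4,−1,8). Then the eigenvalues of L₄'', with multiplicity, are exactly 0, 4, 9−√7, and 9+√7; and since 4 < 9−√7, the second-smallest eigenvalue (algebraic connectivity) of L₄'' is 4, with eigenvector (1,1,−3,1)ᵀ. -/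
open Matrix Polynomial Real

set_option maxHeartbeats 1000000

/-- The nondecreasing list of eigenvalues (roots of the characteristic polynomial,
with multiplicity) of a real matrix. -/
noncomputable def sortedEigenvalues {m : ℕ} (A : Matrix (Fin m) (Fin m) ℝ) : List ℝ :=
  A.charpoly.roots.sort (· ≤ ·)

lemma sqrt7_lt_five : Real.sqrt 7 < 5 := by
  nlinarith [Real.sq_sqrt (show (0:ℝ) ≤ 7 by norm_num), Real.sqrt_nonneg 7]

lemma L4_charpoly : (L₄ 3 4).charpoly
    = (X - C 0) * (X - C 4) * (X - C (9 - Real.sqrt 7)) * (X - C (9 + Real.sqrt 7)) := by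
  have h7 : (C (Real.sqrt 7) : ℝ[X]) * C (Real.sqrt 7) = 7 := by
    rw [← C_mul, Real.mul_self_sqrt (by norm_num)]
    simp [map_ofNat]
  have hm : charmatrix (L₄ 3 4) =
      !![X - 5, 1, 1, 3; 1, X - 6, 1, 4; 1, 1, X - 3, 1; 3, 4, 1, X - 8] := by
    refine Matrix.ext fun i j => ?_
    fin_cases i <;> fin_cases j <;>
      norm_num [charmatrix_apply, L₄, map_ofNat, Matrix.diagonal_apply, Fin.ext_iff]
  rw [Matrix.charpoly, hm]
  rw [Matrix.det_succ_row_zero]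
  simp [Fin.sum_univ_succ, Matrix.det_fin_three, Fin.succAbove, map_sub, map_add, map_ofNat]
  ring_nf
  linear_combination (X^2 - 4*X) * h7

lemma L4_roots : (L₄ 3 4).charpoly.roots
    = ({0, 4, 9 - Real.sqrt 7, 9 + Real.sqrt 7} : Multiset ℝ) := by
  have := Polynomial.roots_multiset_prod_X_sub_C
    ({0, 4, 9 - Real.sqrt 7, 9 + Real.sqrt 7} : Multiset ℝ)
  rw [← this]
  congr 1
  rw [L4_charpoly]
  simp only [Multiset.insert_eq_cons, Multiset.map_cons, Multiset.map_singleton,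
    Multiset.prod_cons, Multiset.prod_singleton]
  ring

theorem stmt_14 :
    L₄ 3 4 = !![5, -1, -1, -3; -1, 6, -1, -4; -1, -1, 3, -1; -3, -4, -1, 8] ∧
    (L₄ 3 4).charpoly.roots =
      ({0, 4, 9 - Real.sqrt 7, 9 + Real.sqrt 7} : Multiset ℝ) ∧
    (4 : ℝ) < 9 - Real.sqrt 7 ∧
    (sortedEigenvalues (L₄ 3 4))[1]! = 4 ∧
    (L₄ 3 4) *ᵥ ![1, 1, -3, 1] = (4 : ℝ) • ![1, 1, -3, 1] := by
  have h5 := sqrt7_lt_five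
  have h0 := Real.sqrt_nonneg 7
  refine ⟨?_, L4_roots, by linarith, ?_, ?_⟩
  · unfold L₄; norm_num
  · have hsort : sortedEigenvalues (L₄ 3 4)
        = [0, 4, 9 - Real.sqrt 7, 9 + Real.sqrt 7] := by
      unfold sortedEigenvalues
      rw [L4_roots]
      apply (fun h hs₁ hs₂ => List.Perm.eq_of_pairwise' hs₁ hs₂ h)
        (Multiset.coe_eq_coe.mp (by rw [Multiset.sort_eq]; rfl))
        (Multiset.pairwise_sort _ _)
      simp only [List.pairwise_cons, List.mem_cons, List.mem_singleton, List.Pairwise.nil]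
      norm_num
      and_intros <;> linarith
    rw [hsort]
    rfl
  · funext i
    fin_cases i <;> simp [L₄, Matrix.mulVec, dotProduct, Fin.sum_univ_four] <;> norm_num
end
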